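/- arXiv:2204.00953 — 5 statements merged into one kernel-verified Lean document; each statement's English description precedes it below -/
import Mathlib

section
/- Let β > σ > δ > 0, ω > δ, γ > 0. Since γβ > 0 > (δ−ω)(σ−δ), there exists exactly one solution I in the open interval (0,1) of the quadratic equation δ(β−δ)I² − bI + (β−σ)ω = 0 where b = γβ + ω(β−δ) + δ(β−σ), namely I = (b − √Δ)/(2δ(β−δ)) with Δ = b² − 4δω(β−δ)(β−σ). -/
theorem sirs_unique_endemic_root
    (β σ δ ω γ : ℝ) (hβσ : β > σ) (hσδ : σ > δ) (hδ : δ > 0)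
    (hωδ : ω > δ) (hγ : γ > 0) :
    (∃! I : ℝ, I ∈ Set.Ioo (0 : ℝ) 1 ∧
      δ * (β - δ) * I ^ 2 - (γ * β + ω * (β - δ) + δ * (β - σ)) * I
        + (β - σ) * ω = 0) ∧
    (((γ * β + ω * (β - δ) + δ * (β - σ))
        - Real.sqrt ((γ * β + ω * (β - δ) + δ * (β - σ)) ^ 2
            - 4 * δ * ω * (β - δ) * (β - σ))) / (2 * δ * (β - δ))
       ∈ Set.Ioo (0 : ℝ) 1 ∧
     δ * (β - δ) * (((γ * β + ω * (β - δ) + δ * (β - σ))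
        - Real.sqrt ((γ * β + ω * (β - δ) + δ * (β - σ)) ^ 2
            - 4 * δ * ω * (β - δ) * (β - σ))) / (2 * δ * (β - δ))) ^ 2
       - (γ * β + ω * (β - δ) + δ * (β - σ))
          * (((γ * β + ω * (β - δ) + δ * (β - σ))
            - Real.sqrt ((γ * β + ω * (β - δ) + δ * (β - σ)) ^ 2
                - 4 * δ * ω * (β - δ) * (β - σ))) / (2 * δ * (β - δ)))
       + (β - σ) * ω = 0) := by
  have hβδ : (0:ℝ) < β - δ := by linarith
  have ha : (0:ℝ) < δ * (β - δ) := mul_pos hδ hβδ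
  set a : ℝ := δ * (β - δ) with ha_def
  set b : ℝ := γ * β + ω * (β - δ) + δ * (β - σ) with hb_def
  set c : ℝ := (β - σ) * ω with hc_def
  have hβ0 : (0:ℝ) < β := by linarith
  have hc : (0:ℝ) < c := mul_pos (by linarith) (by linarith)
  have hb : (0:ℝ) < b := by
    have h1 : 0 < γ * β := mul_pos hγ hβ0
    have h2 : 0 < ω * (β - δ) := mul_pos (by linarith) hβδ
    have h3 : 0 < δ * (β - σ) := mul_pos hδ (by linarith)
    rw [hb_def]; linarith
  -- f(1) < 0
  have hf1 : a - b + c < 0 := by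
    have h1 : 0 < (ω - δ) * (σ - δ) := mul_pos (by linarith) (by linarith)
    have h2 : 0 < γ * β := mul_pos hγ hβ0
    rw [ha_def, hb_def, hc_def]; nlinarith
  -- discriminant
  have hΔeq : b ^ 2 - 4 * δ * ω * (β - δ) * (β - σ) = b ^ 2 - 4 * a * c := by
    rw [ha_def, hc_def]; ring
  have hΔpos : (0:ℝ) < b ^ 2 - 4 * a * c := by
    nlinarith [sq_nonneg (2 * a - b)]
  set s : ℝ := Real.sqrt (b ^ 2 - 4 * δ * ω * (β - δ) * (β - σ)) with hs_def
  have hs2 : s ^ 2 = b ^ 2 - 4 * a * c := by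
    rw [hs_def, Real.sq_sqrt (by rw [hΔeq]; linarith)]; exact hΔeq
  have hs0 : 0 < s := Real.sqrt_pos.2 (by rw [hΔeq]; linarith)
  have hsb : s < b := by nlinarith
  have hs_gt : b - 2 * a < s := by nlinarith [mul_pos ha hc]
  have hs_gt' : 2 * a - b < s := by nlinarith [mul_pos ha hc]
  have h2a : (0:ℝ) < 2 * δ * (β - δ) := mul_pos (mul_pos two_pos hδ) hβδ
  have hden : (2 : ℝ) * δ * (β - δ) = 2 * a := by rw [ha_def]; ring
  set r : ℝ := (b - s) / (2 * δ * (β - δ)) with hr_def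
  have hr_mem : r ∈ Set.Ioo (0:ℝ) 1 := by
    constructor
    · exact div_pos (by linarith) h2a
    · rw [hr_def, div_lt_one h2a, hden]; linarith
  have h2ar : 2 * a * r = b - s := by
    rw [hr_def, hden]; field_simp
  have hroot : a * r ^ 2 - b * r + c = 0 := by
    have key : 4 * a * (a * r ^ 2 - b * r + c) = 4 * a * 0 := by
      rw [mul_zero]
      have hsq : (2 * a * r - b) ^ 2 = s ^ 2 := by rw [h2ar]; ring
      linear_combination hsq + hs2
    exact mul_left_cancel₀ (by positivity) key
  have hroot' : a * r ^ 2 - b * r + c = 0 := hroot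
  refine ⟨⟨r, ⟨hr_mem, by linarith [hroot]⟩, ?_⟩, hr_mem, by linarith [hroot]⟩
  rintro I ⟨⟨hI0, hI1⟩, hIeq⟩
  have hIeq' : a * I ^ 2 - b * I + c = 0 := by linarith [hIeq]
  have hsq : (2 * a * I - b) ^ 2 = s ^ 2 := by
    linear_combination 4 * a * hIeq' - hs2
  rcases sq_eq_sq_iff_eq_or_eq_neg.mp hsq with h | h
  · -- 2aI - b = s, so I = (b+s)/(2a) > 1, contradiction
    exfalso
    have hbs : 2 * a * I = b + s := by linarith
    have hlt : 2 * a * I < 2 * a * 1 := by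
      exact mul_lt_mul_of_pos_left hI1 (by linarith)
    linarith
  · -- 2aI - b = -s, so I = r
    have h2aI : 2 * a * I = b - s := by linarith
    have := h2ar
    have h2 : 2 * a * I = 2 * a * r := by linarith
    exact mul_left_cancel₀ (ne_of_gt (by linarith : (0:ℝ) < 2 * a)) h2
end

section
/- Let β* > δ > 0, ω > δ, γ > 0, and let (I*, R*) be an equilibrium satisfying β* − σ = β*(I*+R*) − δI* and 0 = γI* − ωR* + δR*I*, with I* > 0, R* ≥ 0. Define a = β*/(γ + δR*) and V(I,R) = (I − I*) + I* ln(I*/I) + (a/2)(R − R*)². Then along solutions of İ = (β*(R*−R) + (β*−δ)(I*−I))I, Ṙ = (γ+δR*)(I−I*) − (ω−δI)(R−R*), the derivative of V equals −(β*−δ)(I−I*)² − a(ω−δI)(R−R*)². -/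
theorem sirs_lyapunov_derivative
    (βs σ δ ω γ Istar Rstar : ℝ)
    (hβδ : βs > δ) (hδ : δ > 0) (hωδ : ω > δ) (hγ : γ > 0)
    (hIs : Istar > 0) (hRs : Rstar ≥ 0)
    (heq1 : βs - σ = βs * (Istar + Rstar) - δ * Istar)
    (heq2 : 0 = γ * Istar - ω * Rstar + δ * Rstar * Istar)
    (I R : ℝ → ℝ) (t : ℝ) (hIpos : I t > 0)
    (hI : HasDerivAt I ((βs * (Rstar - R t) + (βs - δ) * (Istar - I t)) * I t) t)
    (hR : HasDerivAt R ((γ + δ * Rstar) * (I t - Istar)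
            - (ω - δ * I t) * (R t - Rstar)) t) :
    HasDerivAt
      (fun s => (I s - Istar) + Istar * Real.log (Istar / I s)
        + (βs / (γ + δ * Rstar) / 2) * (R s - Rstar) ^ 2)
      (-(βs - δ) * (I t - Istar) ^ 2
        - (βs / (γ + δ * Rstar)) * (ω - δ * I t) * (R t - Rstar) ^ 2) t := by
  set I' := (βs * (Rstar - R t) + (βs - δ) * (Istar - I t)) * I t with hI'
  set R' := (γ + δ * Rstar) * (I t - Istar) - (ω - δ * I t) * (R t - Rstar) with hR'
  have hden : γ + δ * Rstar > 0 := by positivity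
  -- derivative of the log term
  have hlog : HasDerivAt (fun s => Real.log (I s)) (I' / I t) t :=
    hI.log (ne_of_gt hIpos)
  have h2 : HasDerivAt (fun s => Istar * (Real.log Istar - Real.log (I s)))
      (Istar * (0 - I' / I t)) t :=
    ((hasDerivAt_const t (Real.log Istar)).sub hlog).const_mul Istar
  -- rewrite log(Istar / I s) eventually
  have hpos : ∀ᶠ s in nhds t, I s > 0 :=
    hI.continuousAt.eventually (eventually_gt_nhds hIpos)
  have h2' : HasDerivAt (fun s => Istar * Real.log (Istar / I s))
      (Istar * (0 - I' / I t)) t := by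
    apply h2.congr_of_eventuallyEq
    filter_upwards [hpos] with s hs
    rw [Real.log_div (ne_of_gt hIs) (ne_of_gt hs)]
  have h1 : HasDerivAt (fun s => I s - Istar) I' t := hI.sub_const Istar
  have h3 : HasDerivAt (fun s => (βs / (γ + δ * Rstar) / 2) * (R s - Rstar) ^ 2)
      ((βs / (γ + δ * Rstar) / 2) * (2 * (R t - Rstar) ^ 1 * R')) t :=
    (((hR.sub_const Rstar).pow 2)).const_mul _
  have := (h1.add h2').add h3
  convert this using 1
  case e'_4 => rfl
  case e'_5 => rfl
  case e'_8 => rfl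
  rw [hI', hR']
  have hIne : I t ≠ 0 := ne_of_gt hIpos
  have hdne : γ + δ * Rstar ≠ 0 := ne_of_gt hden
  field_simp
  ring
end

section
/- Let n ≥ 2, β ∈ ℝⁿ with β₁ < β₂ < ⋯ < βₙ, and c̃ ∈ ℝⁿ with c̃₁ > c̃₂ > ⋯ > c̃ₙ = 0, satisfying (c̃ᵢ − c̃ᵢ₊₁)/(βᵢ₊₁ − βᵢ) > (c̃ᵢ₊₁ − c̃ᵢ₊₂)/(βᵢ₊₂ − βᵢ₊₁) for 1 ≤ i ≤ n−2. Let c* satisfy c̃_{i*+1} < c* < c̃_{i*} for some index i*. Then the vector x* defined by x*_{i*} = (c* − c̃_{i*+1})/(c̃_{i*} − c̃_{i*+1}), x*_{i*+1} = 1 − x*_{i*}, and all other entries zero, is the unique minimizer of β'x over the simplex {x ∈ [0,1]ⁿ : Σxᵢ = 1} subject to c̃'x ≤ c*. -/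
lemma slope_anti_aux (n : ℕ) (β ctil : Fin n → ℝ)
    (hmarg : ∀ i : ℕ, ∀ h2 : i + 2 < n,
      (ctil ⟨i, by linarith⟩ - ctil ⟨i + 1, by linarith⟩) /
        (β ⟨i + 1, by linarith⟩ - β ⟨i, by linarith⟩) >
      (ctil ⟨i + 1, by linarith⟩ - ctil ⟨i + 2, h2⟩) /
        (β ⟨i + 2, h2⟩ - β ⟨i + 1, by linarith⟩)) :
    ∀ k j : ℕ, ∀ hk : k + 1 < n, ∀ hjk : j < k,
      (ctil ⟨k, by omega⟩ - ctil ⟨k + 1, hk⟩) / (β ⟨k + 1, hk⟩ - β ⟨k, by omega⟩) <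
      (ctil ⟨j, by omega⟩ - ctil ⟨j + 1, by omega⟩) /
        (β ⟨j + 1, by omega⟩ - β ⟨j, by omega⟩) := by
  intro k
  induction k with
  | zero => intro j hk hjk; omega
  | succ k ih =>
    intro j hk hjk
    rcases Nat.lt_succ_iff_lt_or_eq.mp hjk with h | h
    · have h1 : k + 1 < n := by omega
      exact lt_trans (hmarg k hk) (ih j h1 h)
    · subst h
      exact hmarg j hk

set_option maxHeartbeats 1000000 in
theorem unique_min_transmission_on_simplex
    (n : ℕ) (hn : 2 ≤ n) (β ctil : Fin n → ℝ)
    (hβ : StrictMono β) (hc : StrictAnti ctil)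
    (hcn : ctil ⟨n - 1, by omega⟩ = 0)
    (hmarg : ∀ i : ℕ, ∀ h2 : i + 2 < n,
      (ctil ⟨i, by omega⟩ - ctil ⟨i + 1, by omega⟩) /
        (β ⟨i + 1, by omega⟩ - β ⟨i, by omega⟩) >
      (ctil ⟨i + 1, by omega⟩ - ctil ⟨i + 2, h2⟩) /
        (β ⟨i + 2, h2⟩ - β ⟨i + 1, by omega⟩))
    (istar : ℕ) (histar : istar + 1 < n) (cstar : ℝ)
    (hcl : ctil ⟨istar + 1, histar⟩ < cstar)
    (hcu : cstar < ctil ⟨istar, by omega⟩)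
    (xstar : Fin n → ℝ)
    (hxstar : xstar = fun j =>
      if j = (⟨istar, by omega⟩ : Fin n) then
        (cstar - ctil ⟨istar + 1, histar⟩) /
          (ctil ⟨istar, by omega⟩ - ctil ⟨istar + 1, histar⟩)
      else if j = (⟨istar + 1, histar⟩ : Fin n) then
        1 - (cstar - ctil ⟨istar + 1, histar⟩) /
          (ctil ⟨istar, by omega⟩ - ctil ⟨istar + 1, histar⟩)
      else 0) :
    ((∀ i, 0 ≤ xstar i) ∧ (∑ i, xstar i) = 1 ∧ (∑ i, ctil i * xstar i) ≤ cstar) ∧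
    ∀ x : Fin n → ℝ, (∀ i, 0 ≤ x i) → (∑ i, x i) = 1 →
      (∑ i, ctil i * x i) ≤ cstar → x ≠ xstar →
      (∑ i, β i * xstar i) < (∑ i, β i * x i) := by
  have hn1 : istar < n := by omega
  set a : Fin n := ⟨istar, hn1⟩ with haeq
  set b : Fin n := ⟨istar + 1, histar⟩ with hbeq
  have hab : a < b := by rw [haeq, hbeq]; exact Fin.mk_lt_mk.mpr (by omega)
  have hba : b ≠ a := by rw [haeq, hbeq]; simp [Fin.ext_iff]
  have hane : a ≠ b := ne_of_lt hab
  have hcl' : ctil b < cstar := hcl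
  have hcu' : cstar < ctil a := hcu
  have hd : 0 < ctil a - ctil b := sub_pos.2 (hc hab)
  have hbd : 0 < β b - β a := sub_pos.2 (hβ hab)
  obtain ⟨lam, hlam, hlamd⟩ : ∃ l : ℝ, 0 < l ∧ l * (ctil a - ctil b) = β b - β a :=
    ⟨(β b - β a) / (ctil a - ctil b), div_pos hbd hd, div_mul_cancel₀ _ (ne_of_gt hd)⟩
  obtain ⟨t, htdef⟩ : ∃ t : ℝ, t = (cstar - ctil b) / (ctil a - ctil b) := ⟨_, rfl⟩
  have htd : t * (ctil a - ctil b) = cstar - ctil b := by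
    rw [htdef]; exact div_mul_cancel₀ _ (ne_of_gt hd)
  have ht0 : 0 ≤ t := by rw [htdef]; exact le_of_lt (div_pos (by linarith) hd)
  have ht1 : t < 1 := by rw [htdef]; exact (div_lt_one hd).2 (by linarith)
  set f : Fin n → ℝ := fun i => β i + lam * ctil i with hf
  set μ : ℝ := β a + lam * ctil a with hμ
  have hfa : f a = μ := rfl
  have hfb : f b = μ := by
    show β b + lam * ctil b = β a + lam * ctil a
    have h2 : lam * ctil a - lam * ctil b = β b - β a := by rw [← mul_sub]; exact hlamd
    linarith
  -- step lemma
  have hstep : ∀ j : ℕ, ∀ hj1 : j + 1 < n, 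
      (j < istar → f ⟨j + 1, hj1⟩ < f ⟨j, by omega⟩) ∧
      (istar < j → f ⟨j, by omega⟩ < f ⟨j + 1, hj1⟩) := by
    intro j hj1
    have hjlt : (⟨j, by omega⟩ : Fin n) < ⟨j + 1, hj1⟩ := Fin.mk_lt_mk.mpr (by omega)
    have hdj : 0 < ctil ⟨j, by omega⟩ - ctil ⟨j + 1, hj1⟩ := sub_pos.2 (hc hjlt)
    have hbj : 0 < β ⟨j + 1, hj1⟩ - β ⟨j, by omega⟩ := sub_pos.2 (hβ hjlt)
    have h4 : lam * (ctil a - ctil b) * (ctil ⟨j, by omega⟩ - ctil ⟨j + 1, hj1⟩)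
        = (β b - β a) * (ctil ⟨j, by omega⟩ - ctil ⟨j + 1, hj1⟩) := by rw [hlamd]
    constructor
    · intro hlt
      have hs := slope_anti_aux n β ctil hmarg istar j histar hlt
      rw [div_lt_div_iff₀ hbd hbj] at hs
      show β ⟨j + 1, hj1⟩ + lam * ctil ⟨j + 1, hj1⟩ < β ⟨j, by omega⟩ + lam * ctil ⟨j, by omega⟩
      rw [← mul_lt_mul_iff_right₀ hd]
      nlinarith [hs, h4]
    · intro hgt
      have hs := slope_anti_aux n β ctil hmarg j istar hj1 hgt
      rw [div_lt_div_iff₀ hbj hbd] at hs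
      show β ⟨j, by omega⟩ + lam * ctil ⟨j, by omega⟩ < β ⟨j + 1, hj1⟩ + lam * ctil ⟨j + 1, hj1⟩
      rw [← mul_lt_mul_iff_right₀ hd]
      nlinarith [hs, h4]
  -- decreasing chain before istar
  have hdec : ∀ d j : ℕ, j + d = istar → ∀ hj : j < n,
      μ ≤ f ⟨j, hj⟩ ∧ (0 < d → μ < f ⟨j, hj⟩) := by
    intro d
    induction d with
    | zero =>
      intro j h hj
      have hji : j = istar := by omega
      subst hji
      exact ⟨le_of_eq hfa.symm, by omega⟩
    | succ d ih =>
      intro j h hj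
      have hj1 : j + 1 < n := by omega
      have hstepj := (hstep j hj1).1 (by omega)
      have hih := (ih (j + 1) (by omega) hj1).1
      exact ⟨le_of_lt (lt_of_le_of_lt hih hstepj), fun _ => lt_of_le_of_lt hih hstepj⟩
  -- increasing chain after istar + 1
  have hinc : ∀ d j : ℕ, j = istar + 1 + d → ∀ hj : j < n,
      μ ≤ f ⟨j, hj⟩ ∧ (0 < d → μ < f ⟨j, hj⟩) := by
    intro d
    induction d with
    | zero =>
      intro j h hj
      have hji : j = istar + 1 := by omega
      subst hji
      exact ⟨le_of_eq hfb.symm, by omega⟩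
    | succ d ih =>
      intro j h hj
      have hj0 : j - 1 < n := by omega
      have hj1 : (j - 1) + 1 < n := by omega
      have hstepj := (hstep (j - 1) hj1).2 (by omega)
      have hih := (ih (j - 1) (by omega) hj0).1
      have hje : (⟨j, hj⟩ : Fin n) = ⟨(j - 1) + 1, hj1⟩ := by
        apply Fin.ext; simp; omega
      rw [hje]
      exact ⟨le_of_lt (lt_of_le_of_lt hih hstepj), fun _ => lt_of_le_of_lt hih hstepj⟩
  have hkey : ∀ i : Fin n, μ ≤ f i := by
    intro i
    rcases Nat.lt_or_ge i.val (istar + 1) with h | h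
    · exact (hdec (istar - i.val) i.val (by omega) i.isLt).1
    · exact (hinc (i.val - (istar + 1)) i.val (by omega) i.isLt).1
  have hkeys : ∀ i : Fin n, i ≠ a → i ≠ b → μ < f i := by
    intro i h1 h2
    have hv1 : i.val ≠ istar := fun h => h1 (Fin.ext h)
    have hv2 : i.val ≠ istar + 1 := fun h => h2 (Fin.ext h)
    rcases Nat.lt_or_ge i.val (istar + 1) with h | h
    · exact (hdec (istar - i.val) i.val (by omega) i.isLt).2 (by omega)
    · exact (hinc (i.val - (istar + 1)) i.val (by omega) i.isLt).2 (by omega)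
  -- sum over two-point support
  have hsum2 : ∀ g : Fin n → ℝ, (∀ i, i ≠ a → i ≠ b → g i = 0) →
      ∑ i, g i = g a + g b := by
    intro g hg
    rw [← Finset.sum_pair hane]
    refine (Finset.sum_subset (Finset.subset_univ _) ?_).symm
    intro i _ hi
    simp only [Finset.mem_insert, Finset.mem_singleton, not_or] at hi
    exact hg i hi.1 hi.2
  -- xstar values
  have hxval : ∀ j : Fin n, xstar j = if j = a then t else if j = b then 1 - t else 0 := by
    intro j
    rw [hxstar, htdef]
  have hxa : xstar a = t := by rw [hxval]; simp
  have hxb : xstar b = 1 - t := by rw [hxval, if_neg hba, if_pos rfl]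
  have hx0 : ∀ j, j ≠ a → j ≠ b → xstar j = 0 := by
    intro j h1 h2; rw [hxval, if_neg h1, if_neg h2]
  have hxsum : (∑ i, xstar i) = 1 := by
    rw [hsum2 xstar hx0, hxa, hxb]; ring
  have hcxs : (∑ i, ctil i * xstar i) = cstar := by
    rw [hsum2 (fun i => ctil i * xstar i)
      (fun i h1 h2 => by show ctil i * xstar i = 0; rw [hx0 i h1 h2]; ring),
      hxa, hxb]
    linarith [htd]
  have hbxs : (∑ i, β i * xstar i) = μ - lam * cstar := by
    rw [hsum2 (fun i => β i * xstar i)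
      (fun i h1 h2 => by show β i * xstar i = 0; rw [hx0 i h1 h2]; ring),
      hxa, hxb]
    have h5 : lam * (t * (ctil a - ctil b)) = lam * (cstar - ctil b) := by rw [htd]
    have h6 : t * (lam * (ctil a - ctil b)) = t * (β b - β a) := by rw [hlamd]
    rw [hμ]
    nlinarith [h5, h6, hlamd]
  refine ⟨⟨?_, hxsum, le_of_eq hcxs⟩, ?_⟩
  · intro i
    rw [hxval]
    split_ifs
    · exact ht0
    · linarith
    · exact le_refl 0
  · intro x hx0' hxs hxc hne
    have hid : ∑ i, β i * x i =
        (∑ i, (f i - μ) * x i) + lam * (cstar - ∑ i, ctil i * x i) + (μ - lam * cstar) := by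
      have e1 : ∀ i ∈ Finset.univ, (f i - μ) * x i
          = β i * x i + lam * (ctil i * x i) - μ * x i := by
        intro i _
        show (β i + lam * ctil i - μ) * x i = _
        ring
      rw [Finset.sum_congr rfl e1, Finset.sum_sub_distrib, Finset.sum_add_distrib,
        ← Finset.mul_sum, ← Finset.mul_sum, hxs]
      ring
    have hge : ∀ i, 0 ≤ (f i - μ) * x i :=
      fun i => mul_nonneg (sub_nonneg.2 (hkey i)) (hx0' i)
    have hT1 : 0 ≤ ∑ i, (f i - μ) * x i := Finset.sum_nonneg (fun i _ => hge i)
    rw [hbxs, hid]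
    by_cases hC : (∑ i, ctil i * x i) = cstar
    · have hT1pos : 0 < ∑ i, (f i - μ) * x i := by
        rcases lt_or_eq_of_le hT1 with h | h
        · exact h
        · exfalso
          apply hne
          have hz := (Finset.sum_eq_zero_iff_of_nonneg (fun i _ => hge i)).1 h.symm
          have hzero : ∀ i, i ≠ a → i ≠ b → x i = 0 := by
            intro i h1 h2
            rcases mul_eq_zero.1 (hz i (Finset.mem_univ i)) with h' | h'
            · exact absurd h' (ne_of_gt (sub_pos.2 (hkeys i h1 h2)))
            · exact h'
          have hsx : x a + x b = 1 := by rw [← hsum2 x hzero]; exact hxs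
          have hcx' : ctil a * x a + ctil b * x b = cstar := by
            rw [← hsum2 (fun i => ctil i * x i)
              (fun i h1 h2 => by show ctil i * x i = 0; rw [hzero i h1 h2]; ring)]
            exact hC
          have hxaeq : x a = t := by
            have h7 : ctil b * (x a + x b) = ctil b * 1 := by rw [hsx]
            have h8 : x a * (ctil a - ctil b) = t * (ctil a - ctil b) := by
              rw [htd]; nlinarith [hcx', h7]
            exact mul_right_cancel₀ (ne_of_gt hd) h8
          funext j
          rw [hxval j]
          split_ifs with h1 h2
          · rw [h1]; exact hxaeq
          · rw [h2]; have := hsx; rw [hxaeq] at this; linarith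
          · exact hzero j h1 h2
      have hzero2 : lam * (cstar - ∑ i, ctil i * x i) = 0 := by rw [hC]; ring
      linarith
    · have hlt : (∑ i, ctil i * x i) < cstar := lt_of_le_of_ne hxc hC
      have hp := mul_pos hlam (sub_pos.2 hlt)
      linarith
end

section
/- Let β ∈ [β₁, βₙ] with β > σ > δ > 0, ω > δ, γ > 0. Define Î_β = (b_β − √Δ_β)/(2δ(β−δ)) with b_β = γβ + ω(β−δ) + δ(β−σ), Δ_β = b_β² − 4δω(β−δ)(β−σ). Then Î_β ≥ Δ*/(2δ(βₙ−δ)) > 0, where Δ* = b* − √((b*)² − 4δω(β₁−δ)(β₁−σ)) and b* = γβₙ + ω(βₙ−δ) + δ(βₙ−σ); consequently ln Î_β is uniformly bounded over β ∈ [β₁, βₙ]. -/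
lemma sqrt_sub_key (b b' P P' : ℝ) (hP' : 0 < P') (hP'P : P' ≤ P)
    (hb : 0 < b) (hbb' : b ≤ b') (hPb : P ≤ b ^ 2) :
    b' - Real.sqrt (b' ^ 2 - P') ≤ b - Real.sqrt (b ^ 2 - P) := by
  have hs := Real.sq_sqrt (by nlinarith : (0:ℝ) ≤ b ^ 2 - P')
  set s := Real.sqrt (b ^ 2 - P') with hsdef
  have hs0 : 0 ≤ s := Real.sqrt_nonneg _
  have hsb : s ≤ b := by nlinarith
  have ht := Real.sq_sqrt (by nlinarith : (0:ℝ) ≤ b' ^ 2 - P')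
  set t := Real.sqrt (b' ^ 2 - P') with htdef
  have ht0 : 0 ≤ t := Real.sqrt_nonneg _
  have h1 : b' - t ≤ b - s := by
    rcases le_or_gt (b' - b + s) 0 with h | h
    · linarith
    · nlinarith [mul_nonneg (sub_nonneg.2 hbb') (sub_nonneg.2 hsb)]
  have h2 : Real.sqrt (b ^ 2 - P) ≤ s := Real.sqrt_le_sqrt (by linarith)
  linarith


lemma disc_nonneg (σ δ ω γ b : ℝ) (hδ : 0 < δ) (hω : 0 < ω) (hγ : 0 < γ)
    (hb : 0 < b) (hbδ : 0 < b - δ) (hbσ : 0 < b - σ) :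
    4 * δ * ω * (b - δ) * (b - σ) ≤ (γ * b + ω * (b - δ) + δ * (b - σ)) ^ 2 := by
  nlinarith [sq_nonneg (ω * (b - δ) - δ * (b - σ)),
    mul_nonneg (mul_pos hγ hb).le
      (add_nonneg (mul_nonneg hω.le hbδ.le) (mul_nonneg hδ.le hbσ.le))]

set_option maxHeartbeats 1000000 in
theorem endemic_fraction_uniform_lower_bound
    (σ δ ω γ β1 βn : ℝ)
    (hσδ : σ > δ) (hδ : δ > 0) (hωδ : ω > δ) (hγ : γ > 0)
    (hβ1 : β1 > σ) (hβ1n : β1 ≤ βn)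
    (Ihat : ℝ → ℝ)
    (hIhat : Ihat = fun b =>
      ((γ * b + ω * (b - δ) + δ * (b - σ))
        - Real.sqrt ((γ * b + ω * (b - δ) + δ * (b - σ)) ^ 2
            - 4 * δ * ω * (b - δ) * (b - σ))) / (2 * δ * (b - δ)))
    (Δstar : ℝ)
    (hΔstar : Δstar =
      (γ * βn + ω * (βn - δ) + δ * (βn - σ))
        - Real.sqrt ((γ * βn + ω * (βn - δ) + δ * (βn - σ)) ^ 2
            - 4 * δ * ω * (β1 - δ) * (β1 - σ))) :
    (∀ β ∈ Set.Icc β1 βn, Ihat β ≥ Δstar / (2 * δ * (βn - δ))) ∧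
    Δstar / (2 * δ * (βn - δ)) > 0 ∧
    ∃ C : ℝ, ∀ β ∈ Set.Icc β1 βn, |Real.log (Ihat β)| ≤ C := by
  have hω : 0 < ω := by linarith
  have hβn : βn > σ := lt_of_lt_of_le hβ1 hβ1n
  set Bn := γ * βn + ω * (βn - δ) + δ * (βn - σ) with hBn
  set P1 := 4 * δ * ω * (β1 - δ) * (β1 - σ) with hP1
  have hβ1δ : 0 < β1 - δ := by linarith
  have hβ1σ : 0 < β1 - σ := by linarith
  have hP1pos : 0 < P1 := by rw [hP1]; positivity
  have hBnpos : 0 < Bn := by rw [hBn]; nlinarith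
  -- numerator lower bound
  have key : ∀ β ∈ Set.Icc β1 βn,
      (γ * β + ω * (β - δ) + δ * (β - σ))
        - Real.sqrt ((γ * β + ω * (β - δ) + δ * (β - σ)) ^ 2
            - 4 * δ * ω * (β - δ) * (β - σ)) ≥ Δstar := by
    rintro β ⟨h1, h2⟩
    set Bb := γ * β + ω * (β - δ) + δ * (β - σ) with hBb
    set Pb := 4 * δ * ω * (β - δ) * (β - σ) with hPb
    have hβδ : 0 < β - δ := by linarith
    have hβσ : 0 < β - σ := by linarith
    have hBbpos : 0 < Bb := by rw [hBb]; nlinarith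
    have hPbP1 : P1 ≤ Pb := by
      rw [hP1, hPb]
      nlinarith [mul_nonneg (mul_pos hδ hω).le
        (mul_nonneg (sub_nonneg.2 h1) (show (0:ℝ) ≤ β + β1 - δ - σ by linarith))]
    have hBbBn : Bb ≤ Bn := by
      rw [hBb, hBn]
      nlinarith [mul_nonneg (show (0:ℝ) ≤ γ + ω + δ by linarith) (sub_nonneg.2 h2)]
    have hPbBb : Pb ≤ Bb ^ 2 := by
      rw [hPb, hBb]
      exact disc_nonneg σ δ ω γ β hδ hω hγ (by linarith) hβδ hβσ
    rw [hΔstar]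
    exact sqrt_sub_key Bb Bn Pb P1 hP1pos hPbP1 hBbpos hBbBn hPbBb
  -- Δstar > 0
  have hΔpos : 0 < Δstar := by
    have hβnδ : 0 < βn - δ := by linarith
    have hβnσ : 0 < βn - σ := by linarith
    have hP1Pn : P1 ≤ 4 * δ * ω * (βn - δ) * (βn - σ) := by
      rw [hP1]
      nlinarith [mul_nonneg (mul_pos hδ hω).le
        (mul_nonneg (sub_nonneg.2 hβ1n) (show (0:ℝ) ≤ βn + β1 - δ - σ by linarith))]
    have hPnBn : 4 * δ * ω * (βn - δ) * (βn - σ) ≤ Bn ^ 2 := by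
      rw [hBn]
      exact disc_nonneg σ δ ω γ βn hδ hω hγ (by linarith) hβnδ hβnσ
    have hP1Bn : P1 ≤ Bn ^ 2 := le_trans hP1Pn hPnBn
    have h1 : Real.sqrt (Bn ^ 2 - P1) < Bn := by
      have h := Real.sqrt_lt_sqrt (show (0:ℝ) ≤ Bn ^ 2 - P1 by linarith)
        (show Bn ^ 2 - P1 < Bn ^ 2 by linarith)
      rwa [Real.sqrt_sq hBnpos.le] at h
    rw [hΔstar]; linarith
  have hden : 0 < 2 * δ * (βn - δ) := by
    have : 0 < βn - δ := by linarith
    positivity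
  have hLpos : 0 < Δstar / (2 * δ * (βn - δ)) := div_pos hΔpos hden
  have hmain : ∀ β ∈ Set.Icc β1 βn, Ihat β ≥ Δstar / (2 * δ * (βn - δ)) := by
    rintro β ⟨h1, h2⟩
    have hβδ : 0 < β - δ := by linarith
    have hk := key β ⟨h1, h2⟩
    rw [hIhat]
    exact div_le_div₀ (by linarith) hk (by positivity) (by nlinarith)
  refine ⟨hmain, hLpos, ?_⟩
  -- log bound
  set L := Δstar / (2 * δ * (βn - δ)) with hL
  set U := Bn / (2 * δ * (β1 - δ)) with hU
  have hUpos : 0 < U := by rw [hU]; positivity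
  refine ⟨max |Real.log L| |Real.log U|, ?_⟩
  rintro β ⟨h1, h2⟩
  have hβδ : 0 < β - δ := by linarith
  have hlow : L ≤ Ihat β := hmain β ⟨h1, h2⟩
  have hup : Ihat β ≤ U := by
    rw [hIhat, hU]
    have hsq : 0 ≤ Real.sqrt ((γ * β + ω * (β - δ) + δ * (β - σ)) ^ 2
          - 4 * δ * ω * (β - δ) * (β - σ)) := Real.sqrt_nonneg _
    have hBbBn : γ * β + ω * (β - δ) + δ * (β - σ) ≤ Bn := by
      rw [hBn]
      nlinarith [mul_nonneg (show (0:ℝ) ≤ γ + ω + δ by linarith) (sub_nonneg.2 h2)]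
    exact div_le_div₀ hBnpos.le (by linarith) (by positivity) (by nlinarith)
  have hIpos : 0 < Ihat β := lt_of_lt_of_le hLpos hlow
  rw [abs_le]
  constructor
  · have hlog := Real.log_le_log hLpos hlow
    have : -|Real.log L| ≤ Real.log L := neg_abs_le _
    have h3 : -(max |Real.log L| |Real.log U|) ≤ -|Real.log L| := by
      simp [le_max_left]
    linarith
  · have hlog := Real.log_le_log hIpos hup
    have : Real.log U ≤ |Real.log U| := le_abs_self _
    have h3 : |Real.log U| ≤ max |Real.log L| |Real.log U| := le_max_right _ _
    linarith
end

section
/- Let 𝒯 : 𝕏 × ℝⁿ → [0, T̄]^{n×n} be an impartial pairwise comparison protocol, i.e., 𝒯_{ij}(x,p) = φ_j([p_j − p_i]₊) for maps φ_j : ℝ_{≥0} → [0,T̄] with φ_j(0)=0 and φ_j(ν)>0 for ν>0. Then the mean dynamics vector field 𝒱_i(x,p) = Σ_{j≠i} x_j 𝒯_{ji}(x,p) − Σ_{j≠i} x_i 𝒯_{ij}(x,p) satisfies Nash stationarity: 𝒱(x,p) = 0 if and only if x ∈ argmax_{y ∈ 𝕏} p'y. -/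
theorem ipc_nash_stationarity
    (n : ℕ) (Tbar : ℝ) (hT : 0 < Tbar)
    (φ : Fin n → ℝ → ℝ)
    (hrange : ∀ j ν, 0 ≤ ν → φ j ν ∈ Set.Icc (0 : ℝ) Tbar)
    (hzero : ∀ j, φ j 0 = 0)
    (hpos : ∀ j ν, 0 < ν → 0 < φ j ν)
    (x p : Fin n → ℝ) (hx0 : ∀ i, 0 ≤ x i) (hx1 : (∑ i, x i) = 1) :
    (∀ i : Fin n,
        (∑ j, x j * φ i (max (p i - p j) 0))
          - (∑ j, x i * φ j (max (p j - p i) 0)) = 0)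
    ↔ (∀ y : Fin n → ℝ, (∀ i, 0 ≤ y i) → (∑ i, y i) = 1 →
        (∑ i, p i * y i) ≤ (∑ i, p i * x i)) := by
  have hn : n ≠ 0 := by rintro rfl; simp at hx1
  have : NeZero n := ⟨hn⟩
  obtain ⟨k, -, hk⟩ := Finset.exists_max_image (Finset.univ : Finset (Fin n)) p
    ⟨0, Finset.mem_univ 0⟩
  constructor
  · intro hV y hy0 hy1
    have hsupp : ∀ i, 0 < x i → p i = p k := by
      by_contra h
      push_neg at h
      obtain ⟨i, hxi, hpi⟩ := h
      have hpik : p i < p k := lt_of_le_of_ne (hk i (Finset.mem_univ i)) hpi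
      obtain ⟨i0, hi0mem, hi0min⟩ :=
        Finset.exists_min_image (Finset.univ.filter (fun j => 0 < x j)) p
          ⟨i, by simp [hxi]⟩
      simp only [Finset.mem_filter] at hi0mem
      have hx_i0 : 0 < x i0 := hi0mem.2
      have hi0k : p i0 < p k := lt_of_le_of_lt (hi0min i (by simp [hxi])) hpik
      have hVi := hV i0
      have hin : (∑ j, x j * φ i0 (max (p i0 - p j) 0)) = 0 := by
        apply Finset.sum_eq_zero
        intro j _
        rcases lt_or_ge 0 (x j) with hj | hj
        · have hle : p i0 ≤ p j := hi0min j (by simp [hj])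
          have hm : max (p i0 - p j) 0 = 0 := max_eq_right (by linarith)
          rw [hm, hzero, mul_zero]
        · rw [le_antisymm hj (hx0 j), zero_mul]
      have hout : 0 < ∑ j, x i0 * φ j (max (p j - p i0) 0) := by
        apply Finset.sum_pos'
        · intro j _
          exact mul_nonneg (hx0 i0) ((hrange j _ (le_max_right _ _)).1)
        · refine ⟨k, Finset.mem_univ k, mul_pos hx_i0 (hpos k _ ?_)⟩
          have : 0 < p k - p i0 := by linarith
          exact lt_max_of_lt_left this
      rw [hin] at hVi
      linarith
    have hx_val : (∑ i, p i * x i) = p k := by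
      have : (∑ i, p i * x i) = ∑ i, p k * x i := by
        apply Finset.sum_congr rfl
        intro i _
        rcases lt_or_ge 0 (x i) with h | h
        · rw [hsupp i h]
        · rw [le_antisymm h (hx0 i)]; simp
      rw [this, ← Finset.mul_sum, hx1, mul_one]
    have hy_val : (∑ i, p i * y i) ≤ p k := by
      have h1 : (∑ i, p i * y i) ≤ ∑ i, p k * y i :=
        Finset.sum_le_sum fun i _ => mul_le_mul_of_nonneg_right (hk i (Finset.mem_univ i)) (hy0 i)
      rw [← Finset.mul_sum, hy1, mul_one] at h1
      exact h1
    rw [hx_val]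
    exact hy_val
  · intro hbr
    have hsupp : ∀ i, 0 < x i → p i = p k := by
      by_contra h
      push_neg at h
      obtain ⟨i, hxi, hpi⟩ := h
      have hpik : p i < p k := lt_of_le_of_ne (hk i (Finset.mem_univ i)) hpi
      set y : Fin n → ℝ := fun j => if j = k then 1 else 0 with hy
      have hy0 : ∀ j, 0 ≤ y j := by intro j; simp [hy]; split <;> norm_num
      have hy1 : (∑ j, y j) = 1 := by simp [hy]
      have hyval : (∑ j, p j * y j) = p k := by
        simp [hy, mul_ite, Finset.sum_ite_eq']
      have hxlt : (∑ j, p j * x j) < p k := by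
        have h1 : (∑ j, p j * x j) < ∑ j, p k * x j := by
          apply Finset.sum_lt_sum
          · intro j _
            exact mul_le_mul_of_nonneg_right (hk j (Finset.mem_univ j)) (hx0 j)
          · exact ⟨i, Finset.mem_univ i, by nlinarith⟩
        rw [← Finset.mul_sum, hx1, mul_one] at h1
        exact h1
      have := hbr y hy0 hy1
      rw [hyval] at this
      linarith
    intro i
    have hin : (∑ j, x j * φ i (max (p i - p j) 0)) = 0 := by
      apply Finset.sum_eq_zero
      intro j _
      rcases lt_or_ge 0 (x j) with hj | hj
      · have hpj : p j = p k := hsupp j hj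
        have hle : p i ≤ p j := by rw [hpj]; exact hk i (Finset.mem_univ i)
        have hm : max (p i - p j) 0 = 0 := max_eq_right (by linarith)
        rw [hm, hzero, mul_zero]
      · rw [le_antisymm hj (hx0 j), zero_mul]
    have hout : (∑ j, x i * φ j (max (p j - p i) 0)) = 0 := by
      apply Finset.sum_eq_zero
      intro j _
      rcases lt_or_ge 0 (x i) with hi | hi
      · have hpi : p i = p k := hsupp i hi
        have hle : p j ≤ p i := by rw [hpi]; exact hk j (Finset.mem_univ j)
        have hm : max (p j - p i) 0 = 0 := max_eq_right (by linarith)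
        rw [hm, hzero, mul_zero]
      · rw [le_antisymm hi (hx0 i), zero_mul]
    rw [hin, hout, sub_zero]
end
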